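/- Let p ≥ 1, let W_y ∈ ℝ^{p×n} be a matrix all of whose rows W_{y(j*)} are nonzero, let b_y, y_lb, y_ub, y⁰, d̂, a_N, b_N ∈ ℝᵖ with a_N ≥ 0 componentwise, let d_max > 0 with ‖d̂‖∞ ≤ d_max, let P_f ∈ ℝ^{2×2} be symmetric positive definite, let ê_o, ẽ_o be scalars with 0 ≤ ê_o ≤ ẽ_o, and let (c̄, h̄) ∈ ℝⁿ × ℝⁿ be a reference satisfying y⁰ = W_y h̄ + b_y + d̂. Define, for j = 1,…,p, α_j^{ub} = (√λ_min(P_f)/‖W_{y(j*)}‖)(y_{ub(j)} − y⁰_{(j)} − 2 d_max − a_{N(j)} ẽ_o − b_{N(j)}) and α_j^{lb} = (√λ_min(P_f)/‖W_{y(j*)}‖)(y⁰_{(j)} − y_{lb(j)} − 2 d_max − a_{N(j)} ẽ_o − b_{N(j)}), and α = min over j of min(α_j^{ub}, α_j^{lb}). Then every (c, h) ∈ ℝⁿ × ℝⁿ with ‖(‖c − c̄‖, ‖h − h̄‖)ᵀ‖_{P_f} ≤ α satisfies, componentwise, W_y h + b_y + d_max·1_p ≤ y_ub − a_N ê_o −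 b_N and W_y h + b_y − d_max·1_p ≥ y_lb + a_N ê_o + b_N. -/

import Mathlib

open Matrix Filter Set
open scoped ENNReal NNReal BigOperators

noncomputable section

namespace LSTMmpc

/-- The logistic sigmoid `σ(z) = 1/(1+e^{-z})`. -/
def sigmoid (z : ℝ) : ℝ := 1 / (1 + Real.exp (-z))

/-- Euclidean norm of a finite real vector. -/
def enorm {k : ℕ} (v : Fin k → ℝ) : ℝ := Real.sqrt (∑ i, v i ^ 2)

/-- Sup (∞) norm of a finite real vector. -/
def vinf {k : ℕ} (v : Fin k → ℝ) : ℝ := ⨆ i, |v i|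

/-- Spectral (ℓ²-induced) norm of a real matrix. -/
def spec {a b : ℕ} (M : Matrix (Fin a) (Fin b) ℝ) : ℝ :=
  ⨆ v : {v : Fin b → ℝ // enorm v ≤ 1}, enorm (M.mulVec v.1)

/-- Induced ∞-norm (maximum absolute row sum) of the horizontal block `[s•A, B, v]`. -/
def rowNorm3 {n m : ℕ} (s : ℝ) (A : Matrix (Fin n) (Fin m) ℝ)
    (B : Matrix (Fin n) (Fin n) ℝ) (v : Fin n → ℝ) : ℝ :=
  ⨆ i, (∑ j, |s * A i j| + ∑ j, |B i j| + |v i|)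

/-- Induced ∞-norm of the horizontal block `[s•A, B, v, C, t•D]`. -/
def rowNorm5 {n m p : ℕ} (s : ℝ) (A : Matrix (Fin n) (Fin m) ℝ)
    (B : Matrix (Fin n) (Fin n) ℝ) (v : Fin n → ℝ)
    (C : Matrix (Fin n) (Fin n) ℝ) (t : ℝ) (D : Matrix (Fin n) (Fin p) ℝ) : ℝ :=
  ⨆ i, (∑ j, |s * A i j| + ∑ j, |B i j| + |v i| + ∑ j, |C i j| + ∑ j, |t * D i j|)

/-- Weighted norm `‖v‖_P = √(vᵀ P v)`. -/
def wnorm {k : ℕ} (P : Matrix (Fin k) (Fin k) ℝ) (v : Fin k → ℝ) : ℝ :=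
  Real.sqrt (v ⬝ᵥ P.mulVec v)

/-- Minimum eigenvalue of a hermitian real matrix. -/
def lamMin {k : ℕ} (P : Matrix (Fin k) (Fin k) ℝ) (hP : P.IsHermitian) : ℝ :=
  ⨅ i, hP.eigenvalues i

/-- Maximum eigenvalue of a hermitian real matrix. -/
def lamMax {k : ℕ} (P : Matrix (Fin k) (Fin k) ℝ) (hP : P.IsHermitian) : ℝ :=
  ⨆ i, hP.eigenvalues i

/-- Spectral radius (over `ℂ`) of a real square matrix. -/
def specRad {k : ℕ} (M : Matrix (Fin k) (Fin k) ℝ) : ℝ≥0∞ :=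
  spectralRadius ℂ (M.map (fun x : ℝ => (x : ℂ)))

/-- Class `K∞` functions `[0,∞) → [0,∞)`. -/
def IsClassKInf (γ : ℝ → ℝ) : Prop :=
  ContinuousOn γ (Set.Ici 0) ∧ γ 0 = 0 ∧ StrictMonoOn γ (Set.Ici 0) ∧
    (∀ s, 0 ≤ s → 0 ≤ γ s) ∧ Tendsto γ atTop atTop

/-- Class `KL` functions. -/
def IsClassKL (β : ℝ → ℕ → ℝ) : Prop :=
  (∀ k, ContinuousOn (fun s => β s k) (Set.Ici 0) ∧
      StrictMonoOn (fun s => β s k) (Set.Ici 0) ∧ β 0 k = 0) ∧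
  (∀ s, 0 < s → StrictAnti (fun k => β s k) ∧ Tendsto (fun k => β s k) atTop (nhds 0)) ∧
  (∀ s, 0 ≤ s → ∀ k, 0 ≤ β s k)

/-- Weights of an LSTM network. -/
structure LSTM (n m p : ℕ) where
  Wf : Matrix (Fin n) (Fin m) ℝ
  Wi : Matrix (Fin n) (Fin m) ℝ
  Wc : Matrix (Fin n) (Fin m) ℝ
  Wo : Matrix (Fin n) (Fin m) ℝ
  Uf : Matrix (Fin n) (Fin n) ℝ
  Ui : Matrix (Fin n) (Fin n) ℝ
  Uc : Matrix (Fin n) (Fin n) ℝ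
  Uo : Matrix (Fin n) (Fin n) ℝ
  bf : Fin n → ℝ
  bi : Fin n → ℝ
  bc : Fin n → ℝ
  bo : Fin n → ℝ
  Wy : Matrix (Fin p) (Fin n) ℝ
  bY : Fin p → ℝ

/-- LSTM state `(c, h)`. -/
abbrev State (n : ℕ) := (Fin n → ℝ) × (Fin n → ℝ)

/-- Augmented state `(c, h, d)`. -/
abbrev AugState (n p : ℕ) := (Fin n → ℝ) × (Fin n → ℝ) × (Fin p → ℝ)

variable {n m p : ℕ}

def stepC (S : LSTM n m p) (u : Fin m → ℝ) (c h : Fin n → ℝ) : Fin n → ℝ := fun j =>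
  sigmoid ((S.Wf.mulVec u + S.Uf.mulVec h + S.bf) j) * c j +
    sigmoid ((S.Wi.mulVec u + S.Ui.mulVec h + S.bi) j) *
      Real.tanh ((S.Wc.mulVec u + S.Uc.mulVec h + S.bc) j)

def stepH (S : LSTM n m p) (u : Fin m → ℝ) (c h : Fin n → ℝ) : Fin n → ℝ := fun j =>
  sigmoid ((S.Wo.mulVec u + S.Uo.mulVec h + S.bo) j) * Real.tanh (stepC S u c h j)

/-- One step of the LSTM dynamics `x⁺ = f(x, u)`. -/
def step (S : LSTM n m p) (x : State n) (u : Fin m → ℝ) : State n :=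
  (stepC S u x.1 x.2, stepH S u x.1 x.2)

/-- Output map `g(x) = W_y h + b_y`. -/
def out (S : LSTM n m p) (x : State n) : Fin p → ℝ := S.Wy.mulVec x.2 + S.bY

/-- LSTM trajectory. -/
def traj (S : LSTM n m p) (x0 : State n) (u : ℕ → Fin m → ℝ) : ℕ → State n
  | 0 => x0
  | k + 1 => step S (traj S x0 u k) (u k)

def sFb (S : LSTM n m p) (umax : ℝ) : ℝ := sigmoid (rowNorm3 umax S.Wf S.Uf S.bf)
def sIb (S : LSTM n m p) (umax : ℝ) : ℝ := sigmoid (rowNorm3 umax S.Wi S.Ui S.bi)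
def sOb (S : LSTM n m p) (umax : ℝ) : ℝ := sigmoid (rowNorm3 umax S.Wo S.Uo S.bo)
def sCb (S : LSTM n m p) (umax : ℝ) : ℝ := Real.tanh (rowNorm3 umax S.Wc S.Uc S.bc)
def sXb (S : LSTM n m p) (umax : ℝ) : ℝ :=
  Real.tanh (sIb S umax * sCb S umax / (1 - sFb S umax))
def alphaD (S : LSTM n m p) (umax : ℝ) : ℝ :=
  (1/4) * spec S.Uf * (sIb S umax * sCb S umax / (1 - sFb S umax)) +
    sIb S umax * spec S.Uc + (1/4) * spec S.Ui * sCb S umax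
def betaD (S : LSTM n m p) (umax : ℝ) : ℝ :=
  (1/4) * spec S.Wf * (sIb S umax * sCb S umax / (1 - sFb S umax)) +
    sIb S umax * spec S.Wc + (1/4) * spec S.Wi * sCb S umax
def Adelta (S : LSTM n m p) (umax : ℝ) : Matrix (Fin 2) (Fin 2) ℝ :=
  !![sFb S umax, alphaD S umax;
     sOb S umax * sFb S umax, alphaD S umax * sOb S umax + (1/4) * sXb S umax * spec S.Uo]
def Bdelta (S : LSTM n m p) (umax : ℝ) : Fin 2 → ℝ :=
  ![betaD S umax, betaD S umax * sOb S umax + (1/4) * sXb S umax * spec S.Wo]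

def setU (m : ℕ) (umax : ℝ) : Set (Fin m → ℝ) := {u | vinf u ≤ umax}
def setH (n : ℕ) : Set (Fin n → ℝ) := {h | vinf h ≤ 1}
def setC (S : LSTM n m p) (umax : ℝ) : Set (Fin n → ℝ) :=
  {c | vinf c ≤ sIb S umax * sCb S umax / (1 - sFb S umax)}
def setX (S : LSTM n m p) (umax : ℝ) : Set (State n) := (setC S umax) ×ˢ (setH n)
def setD (p : ℕ) (dmax : ℝ) : Set (Fin p → ℝ) := {d | vinf d ≤ dmax}

/-- Euclidean norm of the full state. -/
def xnorm {n : ℕ} (x : State n) : ℝ := Real.sqrt (∑ i, x.1 i ^ 2 + ∑ i, x.2 i ^ 2)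

/-- Euclidean norm of the augmented state. -/
def chinorm {n p : ℕ} (χ : AugState n p) : ℝ :=
  Real.sqrt (∑ i, χ.1 i ^ 2 + ∑ i, χ.2.1 i ^ 2 + ∑ i, χ.2.2 i ^ 2)

/-- Incremental input-to-state stability of the LSTM in `X` and `U`. -/
def deltaISS (S : LSTM n m p) (umax : ℝ) : Prop :=
  ∃ β γ, IsClassKL β ∧ IsClassKInf γ ∧
    ∀ (k : ℕ) (xa0 xb0 : State n), xa0 ∈ setX S umax → xb0 ∈ setX S umax →
      ∀ ua ub : ℕ → Fin m → ℝ,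
        (∀ h < k, ua h ∈ setU m umax) → (∀ h < k, ub h ∈ setU m umax) →
        xnorm (traj S xa0 ua k - traj S xb0 ub k) ≤
          β (xnorm (xa0 - xb0)) k + γ (⨆ h ∈ Finset.range k, enorm (ua h - ub h))

/-- Observer gains. -/
structure Gains (n p : ℕ) where
  Lf : Matrix (Fin n) (Fin p) ℝ
  Li : Matrix (Fin n) (Fin p) ℝ
  Lo : Matrix (Fin n) (Fin p) ℝ
  Ld : Matrix (Fin p) (Fin p) ℝ

/-- Componentwise saturation to `[-dmax, dmax]`. -/
def sat {p : ℕ} (dmax : ℝ) (v : Fin p → ℝ) : Fin p → ℝ := fun j =>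
  min (max (v j) (-dmax)) dmax

/-- Observer output `ŷ = W_y ĥ + b_y + d̂`. -/
def yhat (S : LSTM n m p) (hh : Fin n → ℝ) (dh : Fin p → ℝ) : Fin p → ℝ :=
  S.Wy.mulVec hh + S.bY + dh

def obsC (S : LSTM n m p) (G : Gains n p) (u : Fin m → ℝ) (y : Fin p → ℝ)
    (ch hh : Fin n → ℝ) (dh : Fin p → ℝ) : Fin n → ℝ := fun j =>
  sigmoid ((S.Wf.mulVec u + S.Uf.mulVec hh + S.bf + G.Lf.mulVec (y - yhat S hh dh)) j) * ch j +
    sigmoid ((S.Wi.mulVec u + S.Ui.mulVec hh + S.bi + G.Li.mulVec (y - yhat S hh dh)) j) *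
      Real.tanh ((S.Wc.mulVec u + S.Uc.mulVec hh + S.bc) j)

def obsH (S : LSTM n m p) (G : Gains n p) (u : Fin m → ℝ) (y : Fin p → ℝ)
    (ch hh : Fin n → ℝ) (dh : Fin p → ℝ) : Fin n → ℝ := fun j =>
  sigmoid ((S.Wo.mulVec u + S.Uo.mulVec hh + S.bo + G.Lo.mulVec (y - yhat S hh dh)) j) *
    Real.tanh (obsC S G u y ch hh dh j)

def obsD (S : LSTM n m p) (G : Gains n p) (dmax : ℝ) (y : Fin p → ℝ)
    (hh : Fin n → ℝ) (dh : Fin p → ℝ) : Fin p → ℝ :=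
  sat dmax (dh + G.Ld.mulVec (y - yhat S hh dh))

/-- One step of the observer. -/
def obsStep (S : LSTM n m p) (G : Gains n p) (dmax : ℝ) (u : Fin m → ℝ) (y : Fin p → ℝ)
    (χ : AugState n p) : AugState n p :=
  (obsC S G u y χ.1 χ.2.1 χ.2.2, obsH S G u y χ.1 χ.2.1 χ.2.2, obsD S G dmax y χ.2.1 χ.2.2)

/-- Observer trajectory. -/
def obsTraj (S : LSTM n m p) (G : Gains n p) (dmax : ℝ) (u : ℕ → Fin m → ℝ)
    (y : ℕ → Fin p → ℝ) (χ0 : AugState n p) : ℕ → AugState n p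
  | 0 => χ0
  | k + 1 => obsStep S G dmax (u k) (y k) (obsTraj S G dmax u y χ0 k)

def sFh (S : LSTM n m p) (G : Gains n p) (umax dmax : ℝ) : ℝ :=
  sigmoid (rowNorm5 umax S.Wf (S.Uf - G.Lf * S.Wy) S.bf (G.Lf * S.Wy) (2 * dmax) G.Lf)
def sIh (S : LSTM n m p) (G : Gains n p) (umax dmax : ℝ) : ℝ :=
  sigmoid (rowNorm5 umax S.Wi (S.Ui - G.Li * S.Wy) S.bi (G.Li * S.Wy) (2 * dmax) G.Li)
def sOh (S : LSTM n m p) (G : Gains n p) (umax dmax : ℝ) : ℝ :=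
  sigmoid (rowNorm5 umax S.Wo (S.Uo - G.Lo * S.Wy) S.bo (G.Lo * S.Wy) (2 * dmax) G.Lo)
def alphaH (S : LSTM n m p) (G : Gains n p) (umax : ℝ) : ℝ :=
  (1/4) * (sIb S umax * sCb S umax / (1 - sFb S umax)) * spec (S.Uf - G.Lf * S.Wy) +
    sIb S umax * spec S.Uc + (1/4) * sCb S umax * spec (S.Ui - G.Li * S.Wy)
def betaH (S : LSTM n m p) (G : Gains n p) (umax : ℝ) : ℝ :=
  (1/4) * (sIb S umax * sCb S umax / (1 - sFb S umax)) * spec G.Lf +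
    (1/4) * sCb S umax * spec G.Li
def gammaH (S : LSTM n m p) (G : Gains n p) (umax dmax : ℝ) : ℝ :=
  sOh S G umax dmax * alphaH S G umax + (1/4) * sXb S umax * spec (S.Uo - G.Lo * S.Wy)
def Ad (S : LSTM n m p) (G : Gains n p) (umax dmax : ℝ) : Matrix (Fin 3) (Fin 3) ℝ :=
  !![sFh S G umax dmax, alphaH S G umax, betaH S G umax;
     sOh S G umax dmax * sFh S G umax dmax, gammaH S G umax dmax,
       sOh S G umax dmax * betaH S G umax + (1/4) * sXb S umax * spec G.Lo;
     0, spec (G.Ld * S.Wy), spec ((1 : Matrix (Fin p) (Fin p) ℝ) - G.Ld)]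

def setChat (S : LSTM n m p) (G : Gains n p) (umax dmax : ℝ) : Set (Fin n → ℝ) :=
  {c | vinf c ≤ sIh S G umax dmax * sCb S umax / (1 - sFh S G umax dmax)}
def setIhat (S : LSTM n m p) (G : Gains n p) (umax dmax : ℝ) : Set (AugState n p) :=
  (setChat S G umax dmax) ×ˢ ((setH n) ×ˢ (setD p dmax))

/-- Incremental Lyapunov function for the LSTM. -/
def Vs {n : ℕ} (Ps : Matrix (Fin 2) (Fin 2) ℝ) (xa xb : State n) : ℝ :=
  wnorm Ps ![enorm (xa.1 - xb.1), enorm (xa.2 - xb.2)]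

/-- Lyapunov function for the observer estimation error. -/
def Vo {n p : ℕ} (Po : Matrix (Fin 3) (Fin 3) ℝ) (χh χ : AugState n p) : ℝ :=
  wnorm Po ![enorm (χh.1 - χ.1), enorm (χh.2.1 - χ.2.1), enorm (χh.2.2 - χ.2.2)]

/-- Disturbance-augmented LSTM update applied to the observer state. -/
def faug (S : LSTM n m p) (χ : AugState n p) (u : Fin m → ℝ) : AugState n p :=
  (stepC S u χ.1 χ.2.1, stepH S u χ.1 χ.2.1, χ.2.2)

def alphaBar (S : LSTM n m p) (G : Gains n p) (umax dmax : ℝ) : ℝ :=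
  (1/4) * (sIh S G umax dmax * sCb S umax / (1 - sFh S G umax dmax)) * spec (G.Lf * S.Wy) +
    (1/4) * sCb S umax * spec (G.Li * S.Wy)
def betaBar (S : LSTM n m p) (G : Gains n p) (umax dmax : ℝ) : ℝ :=
  (1/4) * (sIh S G umax dmax * sCb S umax / (1 - sFh S G umax dmax)) * spec G.Lf +
    (1/4) * sCb S umax * spec G.Li
def gammaBar (S : LSTM n m p) (G : Gains n p) (umax dmax : ℝ) : ℝ :=
  (1/4) * Real.tanh (sIh S G umax dmax * sCb S umax / (1 - sFh S G umax dmax))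
def Lmat (S : LSTM n m p) (G : Gains n p) (umax dmax : ℝ) : Matrix (Fin 3) (Fin 3) ℝ :=
  !![0, alphaBar S G umax dmax, betaBar S G umax dmax;
     0, gammaBar S G umax dmax * spec (G.Lo * S.Wy) + sOb S umax * alphaBar S G umax dmax,
       gammaBar S G umax dmax * spec G.Lo + sOb S umax * betaBar S G umax dmax;
     0, spec (G.Ld * S.Wy), spec G.Ld]


lemma enorm_nonneg' {k : ℕ} (v : Fin k → ℝ) : 0 ≤ enorm v := Real.sqrt_nonneg _

lemma enorm_pos' {k : ℕ} {v : Fin k → ℝ} (hv : v ≠ 0) : 0 < enorm v := by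
  obtain ⟨i, hi⟩ := Function.ne_iff.1 hv
  exact Real.sqrt_pos.2 (Finset.sum_pos' (fun j _ => sq_nonneg _)
    ⟨i, Finset.mem_univ i, sq_pos_of_ne_zero hi⟩)

lemma abs_dot_le_enorm {k : ℕ} (a b : Fin k → ℝ) :
    |∑ i, a i * b i| ≤ enorm a * enorm b := by
  have h := Finset.sum_mul_sq_le_sq_mul_sq Finset.univ a b
  have h2 : enorm a * enorm b = Real.sqrt ((∑ i, a i ^ 2) * (∑ i, b i ^ 2)) :=
    (Real.sqrt_mul (by positivity) _).symm
  rw [h2, ← Real.sqrt_sq_eq_abs]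
  exact Real.sqrt_le_sqrt h

lemma rayleigh_lamMin {k : ℕ} (P : Matrix (Fin k) (Fin k) ℝ) (hP : P.IsHermitian)
    (v : Fin k → ℝ) : lamMin P hP * (v ⬝ᵥ v) ≤ v ⬝ᵥ P.mulVec v := by
  classical
  set U : Matrix (Fin k) (Fin k) ℝ := (hP.eigenvectorUnitary : Matrix (Fin k) (Fin k) ℝ)
    with hUdef
  have hU1 : U * star U = 1 := (Matrix.mem_unitaryGroup_iff).mp hP.eigenvectorUnitary.2
  set w : Fin k → ℝ := star U *ᵥ v with hw
  have hvecMul : v ᵥ* U = w := by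
    funext i
    simp [hw, Matrix.vecMul, Matrix.mulVec, dotProduct, mul_comm]
  have hPv : v ⬝ᵥ P.mulVec v = ∑ i, hP.eigenvalues i * w i ^ 2 := by
    conv_lhs => rw [hP.spectral_theorem, Unitary.conjStarAlgAut_apply]
    rw [← Matrix.mulVec_mulVec, ← Matrix.mulVec_mulVec, Matrix.dotProduct_mulVec, hvecMul, ← hw]
    have h3 : (Matrix.diagonal (RCLike.ofReal ∘ hP.eigenvalues) : Matrix (Fin k) (Fin k) ℝ) *ᵥ w
        = fun i => hP.eigenvalues i * w i := by
      funext i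
      simp [Matrix.mulVec_diagonal]
    rw [h3]
    simp only [dotProduct]
    exact Finset.sum_congr rfl fun i _ => by ring
  have hvv : v ⬝ᵥ v = ∑ i, w i ^ 2 := by
    have h4 : v ⬝ᵥ v = w ⬝ᵥ w := by
      have h1 : w ⬝ᵥ w = (v ᵥ* U) ⬝ᵥ (star U *ᵥ v) := by rw [hvecMul, ← hw]
      rw [h1, ← Matrix.dotProduct_mulVec, Matrix.mulVec_mulVec, hU1, Matrix.one_mulVec]
    rw [h4]; simp [dotProduct, pow_two]
  rw [hPv, hvv, Finset.mul_sum]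
  refine Finset.sum_le_sum fun i _ => ?_
  exact mul_le_mul_of_nonneg_right
    (ciInf_le (Set.Finite.bddBelow (Set.finite_range _)) i) (sq_nonneg _)

/-- membership in the terminal level set implies the tightened
output constraints (Part 2a of the proof of Theorem 4). -/
theorem statement16 {n p : ℕ} (hp : 1 ≤ p) (Wy : Matrix (Fin p) (Fin n) ℝ)
    (hWy : ∀ j, Wy j ≠ 0)
    (bY ylb yub y0 dh aN bN : Fin p → ℝ) (haN : ∀ j, 0 ≤ aN j)
    (dmax : ℝ) (hdmax : 0 < dmax) (hdh : vinf dh ≤ dmax)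
    (Pf : Matrix (Fin 2) (Fin 2) ℝ) (hPf : Pf.PosDef)
    (eo et : ℝ) (heo : 0 ≤ eo) (hee : eo ≤ et)
    (cb hb : Fin n → ℝ) (href : y0 = Wy.mulVec hb + bY + dh) :
    ∀ c h : Fin n → ℝ,
      wnorm Pf ![enorm (c - cb), enorm (h - hb)] ≤
        (⨅ j : Fin p, min
          ((Real.sqrt (lamMin Pf hPf.1) / enorm (Wy j)) *
            (yub j - y0 j - 2 * dmax - aN j * et - bN j))
          ((Real.sqrt (lamMin Pf hPf.1) / enorm (Wy j)) *
            (y0 j - ylb j - 2 * dmax - aN j * et - bN j))) →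
      (∀ j, Wy.mulVec h j + bY j + dmax ≤ yub j - aN j * eo - bN j) ∧
      (∀ j, ylb j + aN j * eo + bN j ≤ Wy.mulVec h j + bY j - dmax) := by
  intro c h hle
  have hp' : Nonempty (Fin p) := ⟨⟨0, hp⟩⟩
  set lmin := lamMin Pf hPf.1 with hlm
  have hlpos : 0 < lmin := by
    obtain ⟨i, hi⟩ := exists_eq_ciInf_of_finite (f := fun i => hPf.1.eigenvalues i)
    rw [hlm, lamMin, ← hi]
    exact hPf.eigenvalues_pos i
  set L := Real.sqrt lmin with hLdef
  have hL : 0 < L := Real.sqrt_pos.2 hlpos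
  set e2 := enorm (h - hb) with he2
  have he2n : 0 ≤ e2 := enorm_nonneg' _
  set v : Fin 2 → ℝ := ![enorm (c - cb), e2] with hv
  have hA : L * e2 ≤ wnorm Pf v := by
    have hdot : v ⬝ᵥ v = enorm (c - cb) ^ 2 + e2 ^ 2 := by
      simp [hv, dotProduct, Fin.sum_univ_two]; ring
    have h1 : lmin * e2 ^ 2 ≤ v ⬝ᵥ Pf.mulVec v := by
      refine le_trans ?_ (rayleigh_lamMin Pf hPf.1 v)
      have h2 : e2 ^ 2 ≤ v ⬝ᵥ v := by rw [hdot]; nlinarith [sq_nonneg (enorm (c - cb))]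
      exact mul_le_mul_of_nonneg_left h2 hlpos.le
    have h3 := Real.sqrt_le_sqrt h1
    rwa [Real.sqrt_mul hlpos.le, Real.sqrt_sq he2n] at h3
  -- key componentwise bound
  have key : ∀ j, enorm (Wy j) * e2 ≤ yub j - y0 j - 2 * dmax - aN j * et - bN j ∧
      enorm (Wy j) * e2 ≤ y0 j - ylb j - 2 * dmax - aN j * et - bN j := by
    intro j
    have hNj : 0 < enorm (Wy j) := enorm_pos' (hWy j)
    have hinf : wnorm Pf v ≤ min
        ((L / enorm (Wy j)) * (yub j - y0 j - 2 * dmax - aN j * et - bN j))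
        ((L / enorm (Wy j)) * (y0 j - ylb j - 2 * dmax - aN j * et - bN j)) :=
      le_trans hle (ciInf_le (Set.Finite.bddBelow (Set.finite_range _)) j)
    have solve : ∀ X : ℝ, wnorm Pf v ≤ (L / enorm (Wy j)) * X → enorm (Wy j) * e2 ≤ X := by
      intro X hX
      have h5 : L * (enorm (Wy j) * e2) ≤ L * X := by
        calc L * (enorm (Wy j) * e2) = enorm (Wy j) * (L * e2) := by ring
          _ ≤ enorm (Wy j) * ((L / enorm (Wy j)) * X) :=
              mul_le_mul_of_nonneg_left (hA.trans hX) hNj.le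
          _ = L * X := by field_simp
      exact le_of_mul_le_mul_left h5 hL
    exact ⟨solve _ (hinf.trans (min_le_left _ _)), solve _ (hinf.trans (min_le_right _ _))⟩
  have hdhj : ∀ j, |dh j| ≤ dmax := by
    intro j
    simp only [vinf] at hdh
    exact le_trans (le_ciSup (f := fun i => |dh i|)
      (Set.Finite.bddAbove (Set.finite_range _)) j) hdh
  have hrow : ∀ j, |Wy.mulVec h j - Wy.mulVec hb j| ≤ enorm (Wy j) * e2 := by
    intro j
    have hdi : Wy.mulVec h j - Wy.mulVec hb j = ∑ i, Wy j i * (h - hb) i := by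
      simp [Matrix.mulVec, dotProduct, ← Finset.sum_sub_distrib, mul_sub]
    rw [hdi, he2]
    exact abs_dot_le_enorm _ _
  have hy0 : ∀ j, y0 j = Wy.mulVec hb j + bY j + dh j := by
    intro j; rw [href]; rfl
  have haNe : ∀ j, aN j * eo ≤ aN j * et := fun j =>
    mul_le_mul_of_nonneg_left hee (haN j)
  constructor <;> intro j <;>
    [ {have h1 := (key j).1
       have h2 := (abs_le.1 (hrow j)).2
       have h3 := (abs_le.1 (hdhj j)).2
       have h4 := (abs_le.1 (hdhj j)).1
       have h5 := hy0 j
       have h6 := haNe j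
       linarith};
      {have h1 := (key j).2
       have h2 := (abs_le.1 (hrow j)).1
       have h3 := (abs_le.1 (hdhj j)).2
       have h4 := (abs_le.1 (hdhj j)).1
       have h5 := hy0 j
       have h6 := haNe j
       linarith}]

end LSTMmpc
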